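/- arXiv:1709.08282 — 4 statements merged into one kernel-verified Lean document; each statement's English description precedes it below -/
import Mathlib

section
/- Let Φ : ℝⁿ → [0,∞) be measurable and f : ℝⁿ → ℝ a nonnegative Schwartz (or bounded integrable continuous) function with f = 1 on the unit ball B(0,1). If the Hausdorff operator H_Φ f(x) = ∫_{ℝⁿ} Φ(y) f(x/|y|) dy satisfies ∫_{B(0,1)} |H_Φ f(x)| dx < ∞, then ∫_{B(0,1)} |y|ⁿ Φ(y) dy < ∞ and ∫_{B(0,1)ᶜ} Φ(y) dy < ∞. -/
open MeasureTheory Metric Complex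
open scoped ENNReal NNReal RealInnerProductSpace FourierTransform

noncomputable section

def hausdorffOp {n : ℕ} (Φ : EuclideanSpace ℝ (Fin n) → ℝ) (f : EuclideanSpace ℝ (Fin n) → ℂ)
    (x : EuclideanSpace ℝ (Fin n)) : ℂ :=
  ∫ y, (Φ y : ℂ) * f (‖y‖⁻¹ • x)

def hausdorffAdj {n : ℕ} (Φ : EuclideanSpace ℝ (Fin n) → ℝ) (f : EuclideanSpace ℝ (Fin n) → ℂ)
    (x : EuclideanSpace ℝ (Fin n)) : ℂ :=
  ∫ y, (Φ y : ℂ) * ((‖y‖ ^ n : ℝ) : ℂ) * f (‖y‖ • x)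

def STFT {n : ℕ} (φ f : EuclideanSpace ℝ (Fin n) → ℂ) (x ξ : EuclideanSpace ℝ (Fin n)) : ℂ :=
  ∫ t, f t * (starRingEnd ℂ) (φ (t - x)) * Complex.exp ((-(2 * Real.pi * ⟪t, ξ⟫) : ℝ) * Complex.I)

def LpE {α : Type*} [MeasurableSpace α] (p : ℝ≥0∞) (μ : Measure α) (g : α → ℝ≥0∞) : ℝ≥0∞ :=
  if p = ∞ then essSup g μ else (∫⁻ a, g a ^ p.toReal ∂μ) ^ (1 / p.toReal)

def modNorm {n : ℕ} (p q : ℝ≥0∞) (φ f : EuclideanSpace ℝ (Fin n) → ℂ) : ℝ≥0∞ :=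
  LpE q volume (fun ξ => LpE p volume (fun x => (‖STFT φ f x ξ‖₊ : ℝ≥0∞)))

def amalgamNorm {n : ℕ} (p q : ℝ≥0∞) (φ f : EuclideanSpace ℝ (Fin n) → ℂ) : ℝ≥0∞ :=
  LpE p volume (fun x => LpE q volume (fun ξ => (‖STFT φ f x ξ‖₊ : ℝ≥0∞)))

def basicAssumption {n : ℕ} (Φ : EuclideanSpace ℝ (Fin n) → ℝ) : Prop :=
  (∫⁻ y in ball (0 : EuclideanSpace ℝ (Fin n)) 1, ENNReal.ofReal (‖y‖ ^ n * Φ y)) < ⊤ ∧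
  (∫⁻ y in (ball (0 : EuclideanSpace ℝ (Fin n)) 1)ᶜ, ENNReal.ofReal (Φ y)) < ⊤

theorem stmt0 {n : ℕ} (hn : 0 < n) (Φ : EuclideanSpace ℝ (Fin n) → ℝ)
    (hΦm : Measurable Φ) (hΦnn : ∀ y, 0 ≤ Φ y)
    (f : EuclideanSpace ℝ (Fin n) → ℝ) (hfc : Continuous f) (hfi : Integrable f)
    (hfb : ∃ C, ∀ x, |f x| ≤ C) (hfnn : ∀ x, 0 ≤ f x)
    (hfone : ∀ x ∈ ball (0 : EuclideanSpace ℝ (Fin n)) 1, f x = 1)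
    (hH : (∫⁻ x in ball (0 : EuclideanSpace ℝ (Fin n)) 1, ∫⁻ y, ENNReal.ofReal (Φ y * f (‖y‖⁻¹ • x))) < ⊤) :
    (∫⁻ y in ball (0 : EuclideanSpace ℝ (Fin n)) 1, ENNReal.ofReal (‖y‖ ^ n * Φ y)) < ⊤ ∧
    (∫⁻ y in (ball (0 : EuclideanSpace ℝ (Fin n)) 1)ᶜ, ENNReal.ofReal (Φ y)) < ⊤ := by
  have hmeas : Measurable fun p : EuclideanSpace ℝ (Fin n) × EuclideanSpace ℝ (Fin n) =>
      ENNReal.ofReal (Φ p.2 * f (‖p.2‖⁻¹ • p.1)) := by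
    apply Measurable.ennreal_ofReal
    fun_prop
  have hK : (∫⁻ y, ∫⁻ x in ball (0 : EuclideanSpace ℝ (Fin n)) 1,
      ENNReal.ofReal (Φ y * f (‖y‖⁻¹ • x))) < ⊤ := by
    rw [← lintegral_lintegral_swap hmeas.aemeasurable]
    exact hH
  have hvolB_pos : 0 < volume (ball (0 : EuclideanSpace ℝ (Fin n)) 1) :=
    measure_ball_pos volume 0 one_pos
  have hrank : Module.finrank ℝ (EuclideanSpace ℝ (Fin n)) = n := finrank_euclideanSpace_fin
  haveI : Nontrivial (EuclideanSpace ℝ (Fin n)) :=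
    Module.nontrivial_of_finrank_pos (R := ℝ) (M := EuclideanSpace ℝ (Fin n)) (by rw [hrank]; exact hn)
  have key : ∀ y : EuclideanSpace ℝ (Fin n),
      ENNReal.ofReal (Φ y) * volume (ball (0 : EuclideanSpace ℝ (Fin n)) (min ‖y‖ 1)) ≤
      ∫⁻ x in ball (0 : EuclideanSpace ℝ (Fin n)) 1, ENNReal.ofReal (Φ y * f (‖y‖⁻¹ • x)) := by
    intro y
    have hsub : ball (0 : EuclideanSpace ℝ (Fin n)) (min ‖y‖ 1) ⊆
        ball (0 : EuclideanSpace ℝ (Fin n)) 1 := ball_subset_ball (min_le_right _ _)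
    calc ENNReal.ofReal (Φ y) * volume (ball (0 : EuclideanSpace ℝ (Fin n)) (min ‖y‖ 1))
        = ∫⁻ x in ball (0 : EuclideanSpace ℝ (Fin n)) (min ‖y‖ 1),
            ENNReal.ofReal (Φ y * f (‖y‖⁻¹ • x)) := by
          rw [setLIntegral_congr_fun measurableSet_ball
            (fun x hx => ?_), setLIntegral_const, mul_comm]
          have hx' : ‖x‖ < min ‖y‖ 1 := by simpa [mem_ball, dist_eq_norm] using hx
          have hy0 : 0 < ‖y‖ := lt_of_le_of_lt (norm_nonneg x) (lt_of_lt_of_le hx' (min_le_left _ _))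
          have hmem : ‖y‖⁻¹ • x ∈ ball (0 : EuclideanSpace ℝ (Fin n)) 1 := by
            rw [mem_ball, dist_zero_right, norm_smul, norm_inv, norm_norm]
            calc ‖y‖⁻¹ * ‖x‖ < ‖y‖⁻¹ * ‖y‖ :=
                  mul_lt_mul_of_pos_left (lt_of_lt_of_le hx' (min_le_left _ _))
                    (inv_pos.mpr hy0)
              _ = 1 := inv_mul_cancel₀ hy0.ne'
          rw [hfone _ hmem, mul_one]
      _ ≤ _ := lintegral_mono_set hsub
  constructor
  · have h1 : (∫⁻ y in ball (0 : EuclideanSpace ℝ (Fin n)) 1, ENNReal.ofReal (‖y‖ ^ n * Φ y)) *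
        volume (ball (0 : EuclideanSpace ℝ (Fin n)) 1) ≤
        ∫⁻ y, ∫⁻ x in ball (0 : EuclideanSpace ℝ (Fin n)) 1,
          ENNReal.ofReal (Φ y * f (‖y‖⁻¹ • x)) := by
      rw [← lintegral_mul_const (f := fun y : EuclideanSpace ℝ (Fin n) => ENNReal.ofReal (‖y‖ ^ n * Φ y))
          _ ((measurable_norm.pow_const n).mul hΦm).ennreal_ofReal,
        ← lintegral_indicator measurableSet_ball]
      refine lintegral_mono fun y => ?_
      by_cases hy : y ∈ ball (0 : EuclideanSpace ℝ (Fin n)) 1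
      · rw [Set.indicator_of_mem hy]
        have hy' : ‖y‖ < 1 := by simpa [mem_ball, dist_zero_right] using hy
        have hmin : min ‖y‖ 1 = ‖y‖ := min_eq_left hy'.le
        have hkey := key y
        rw [hmin, Measure.addHaar_ball volume 0 (norm_nonneg y), hrank] at hkey
        calc ENNReal.ofReal (‖y‖ ^ n * Φ y) * volume (ball (0 : EuclideanSpace ℝ (Fin n)) 1)
            = ENNReal.ofReal (Φ y) * (ENNReal.ofReal (‖y‖ ^ n) *
                volume (ball (0 : EuclideanSpace ℝ (Fin n)) 1)) := by
              rw [ENNReal.ofReal_mul (pow_nonneg (norm_nonneg y) n)]; ring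
          _ ≤ _ := hkey
      · simp [Set.indicator_of_notMem hy]
    exact ENNReal.lt_top_of_mul_ne_top_left (lt_of_le_of_lt h1 hK).ne hvolB_pos.ne'
  · have h1 : (∫⁻ y in (ball (0 : EuclideanSpace ℝ (Fin n)) 1)ᶜ, ENNReal.ofReal (Φ y)) *
        volume (ball (0 : EuclideanSpace ℝ (Fin n)) 1) ≤
        ∫⁻ y, ∫⁻ x in ball (0 : EuclideanSpace ℝ (Fin n)) 1,
          ENNReal.ofReal (Φ y * f (‖y‖⁻¹ • x)) := by
      rw [← lintegral_mul_const _ hΦm.ennreal_ofReal,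
        ← lintegral_indicator measurableSet_ball.compl]
      refine lintegral_mono fun y => ?_
      by_cases hy : y ∈ (ball (0 : EuclideanSpace ℝ (Fin n)) 1)ᶜ
      · rw [Set.indicator_of_mem hy]
        have hy' : (1 : ℝ) ≤ ‖y‖ := by
          simpa [mem_ball, dist_zero_right, not_lt] using hy
        have hmin : min ‖y‖ 1 = 1 := min_eq_right hy'
        have hkey := key y
        rw [hmin] at hkey
        exact hkey
      · simp [Set.indicator_of_notMem hy]
    exact ENNReal.lt_top_of_mul_ne_top_left (lt_of_le_of_lt h1 hK).ne hvolB_pos.ne'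
end
end

section
/- Let Φ : ℝⁿ → [0,∞) be measurable with ∫_{B(0,1)} |y|ⁿ Φ(y) dy < ∞ and ∫_{B(0,1)ᶜ} Φ(y) dy < ∞. Then for every Schwartz function f, the function H_Φ f is integrable over the unit ball: ∫_{B(0,1)} |H_Φ f(x)| dx ≤ ∫_{B(0,1)} |y|ⁿ Φ(y) dy · ‖f‖_{L¹} + |B(0,1)| · ‖f‖_{L^∞} · ∫_{B(0,1)ᶜ} Φ(y) dy < ∞. -/
open MeasureTheory Metric Complex
open scoped ENNReal NNReal RealInnerProductSpace FourierTransform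

noncomputable section

lemma lintegral_comp_smul_aux {n : ℕ} (g : EuclideanSpace ℝ (Fin n) → ℝ≥0∞)
    (c : ℝ) (hc : c ≠ 0) :
    ∫⁻ x, g (c • x) = ENNReal.ofReal (|c| ^ n)⁻¹ * ∫⁻ x, g x := by
  calc ∫⁻ x, g (c • x)
      = ∫⁻ y, g y ∂(Measure.map (c • ·) volume) :=
        (MeasureTheory.lintegral_map_equiv g
          (Homeomorph.smul (isUnit_iff_ne_zero.2 hc).unit).toMeasurableEquiv).symm
    _ = ENNReal.ofReal (|c| ^ n)⁻¹ * ∫⁻ x, g x := by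
        rw [Measure.map_addHaar_smul volume hc, lintegral_smul_measure,
          finrank_euclideanSpace_fin, abs_inv, _root_.abs_pow, smul_eq_mul]

lemma ball_est_aux {n : ℕ} (f : EuclideanSpace ℝ (Fin n) → ℂ) {y : EuclideanSpace ℝ (Fin n)}
    (hy : y ≠ 0) :
    (∫⁻ x in ball (0 : EuclideanSpace ℝ (Fin n)) 1, (‖f (‖y‖⁻¹ • x)‖₊ : ℝ≥0∞)) ≤
      ENNReal.ofReal (‖y‖ ^ n) * ∫⁻ x, (‖f x‖₊ : ℝ≥0∞) := by
  have hc : ‖y‖⁻¹ ≠ 0 := inv_ne_zero (norm_ne_zero_iff.2 hy)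
  calc (∫⁻ x in ball (0 : EuclideanSpace ℝ (Fin n)) 1, (‖f (‖y‖⁻¹ • x)‖₊ : ℝ≥0∞))
      ≤ ∫⁻ x, (‖f (‖y‖⁻¹ • x)‖₊ : ℝ≥0∞) := setLIntegral_le_lintegral _ _
    _ = ENNReal.ofReal (|‖y‖⁻¹| ^ n)⁻¹ * ∫⁻ x, (‖f x‖₊ : ℝ≥0∞) :=
        lintegral_comp_smul_aux (fun z => (‖f z‖₊ : ℝ≥0∞)) _ hc
    _ = ENNReal.ofReal (‖y‖ ^ n) * ∫⁻ x, (‖f x‖₊ : ℝ≥0∞) := by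
        rw [_root_.abs_of_nonneg (inv_nonneg.2 (norm_nonneg y)), ← inv_pow, inv_inv]

lemma compl_est_aux {n : ℕ} (f : EuclideanSpace ℝ (Fin n) → ℂ) {y : EuclideanSpace ℝ (Fin n)}
    (hy : y ≠ 0) :
    (∫⁻ x in ball (0 : EuclideanSpace ℝ (Fin n)) 1, (‖f (‖y‖⁻¹ • x)‖₊ : ℝ≥0∞)) ≤
      volume (ball (0 : EuclideanSpace ℝ (Fin n)) 1) * eLpNorm f ⊤ volume := by
  have hc : ‖y‖⁻¹ ≠ 0 := inv_ne_zero (norm_ne_zero_iff.2 hy)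
  have h1 : ∀ᵐ z : EuclideanSpace ℝ (Fin n), (‖f z‖₊ : ℝ≥0∞) ≤ eLpNormEssSup f volume := by
    filter_upwards [ae_le_eLpNormEssSup (f := f) (μ := volume)] with z hz using hz
  have h2 : ∀ᵐ x : EuclideanSpace ℝ (Fin n),
      (‖f (‖y‖⁻¹ • x)‖₊ : ℝ≥0∞) ≤ eLpNormEssSup f volume :=
    (Measure.quasiMeasurePreserving_smul volume hc).ae h1
  calc (∫⁻ x in ball (0 : EuclideanSpace ℝ (Fin n)) 1, (‖f (‖y‖⁻¹ • x)‖₊ : ℝ≥0∞))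
      ≤ ∫⁻ _x in ball (0 : EuclideanSpace ℝ (Fin n)) 1, eLpNormEssSup f volume :=
        lintegral_mono_ae (ae_restrict_of_ae h2)
    _ = volume (ball (0 : EuclideanSpace ℝ (Fin n)) 1) * eLpNorm f ⊤ volume := by
        rw [setLIntegral_const, eLpNorm_exponent_top, mul_comm]

theorem stmt2 {n : ℕ} (hn : 0 < n) (Φ : EuclideanSpace ℝ (Fin n) → ℝ)
    (hΦm : Measurable Φ) (hΦnn : ∀ y, 0 ≤ Φ y)
    (hb1 : (∫⁻ y in ball (0 : EuclideanSpace ℝ (Fin n)) 1, ENNReal.ofReal (‖y‖ ^ n * Φ y)) < ⊤)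
    (hb2 : (∫⁻ y in (ball (0 : EuclideanSpace ℝ (Fin n)) 1)ᶜ, ENNReal.ofReal (Φ y)) < ⊤)
    (f : SchwartzMap (EuclideanSpace ℝ (Fin n)) ℂ) :
    (∫⁻ x in ball (0 : EuclideanSpace ℝ (Fin n)) 1, (‖hausdorffOp Φ (⇑f) x‖₊ : ℝ≥0∞)) ≤
        (∫⁻ y in ball (0 : EuclideanSpace ℝ (Fin n)) 1, ENNReal.ofReal (‖y‖ ^ n * Φ y)) * eLpNorm (⇑f) 1 volume +
          volume (ball (0 : EuclideanSpace ℝ (Fin n)) 1) * eLpNorm (⇑f) ⊤ volume *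
            ∫⁻ y in (ball (0 : EuclideanSpace ℝ (Fin n)) 1)ᶜ, ENNReal.ofReal (Φ y) ∧
      (∫⁻ x in ball (0 : EuclideanSpace ℝ (Fin n)) 1, (‖hausdorffOp Φ (⇑f) x‖₊ : ℝ≥0∞)) < ⊤ := by
  haveI : Nontrivial (EuclideanSpace ℝ (Fin n)) := by
    refine Module.nontrivial_of_finrank_pos (R := ℝ) ?_
    rw [finrank_euclideanSpace_fin]; exact hn
  set B := ball (0 : EuclideanSpace ℝ (Fin n)) 1 with hB
  have hL1 : eLpNorm (⇑f) 1 volume = ∫⁻ z, (‖f z‖₊ : ℝ≥0∞) := by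
    simp [eLpNorm_one_eq_lintegral_enorm]; rfl
  have hL1fin : eLpNorm (⇑f) 1 volume < ⊤ :=
    ((memLp_one_iff_integrable).mpr (f.integrable)).2
  have hLinf_fin : eLpNorm (⇑f) ⊤ volume < ⊤ :=
    (memLp_top_of_bound f.continuous.aestronglyMeasurable _
      (Filter.Eventually.of_forall (fun x => f.norm_le_seminorm ℝ x))).2
  have hBfin : volume B < ⊤ := measure_ball_lt_top
  -- pointwise bound
  have hpt : ∀ x : EuclideanSpace ℝ (Fin n), (‖hausdorffOp Φ (⇑f) x‖₊ : ℝ≥0∞) ≤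
      ∫⁻ y, ENNReal.ofReal (Φ y) * (‖f (‖y‖⁻¹ • x)‖₊ : ℝ≥0∞) := by
    intro x
    refine le_trans (enorm_integral_le_lintegral_enorm _) (le_of_eq ?_)
    refine lintegral_congr fun y => ?_
    show ((‖(Φ y : ℂ) * f (‖y‖⁻¹ • x)‖₊ : ℝ≥0) : ℝ≥0∞) = _
    rw [nnnorm_mul, ENNReal.coe_mul, Complex.nnnorm_real]
    congr 1; exact Real.enorm_eq_ofReal (hΦnn y)
  have hmeas : Measurable fun p : EuclideanSpace ℝ (Fin n) × EuclideanSpace ℝ (Fin n) =>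
      ENNReal.ofReal (Φ p.2) * (‖f (‖p.2‖⁻¹ • p.1)‖₊ : ℝ≥0∞) := by
    refine Measurable.mul (f := fun p : EuclideanSpace ℝ (Fin n) × EuclideanSpace ℝ (Fin n) => ENNReal.ofReal (Φ p.2))
      (g := fun p => (‖f (‖p.2‖⁻¹ • p.1)‖₊ : ℝ≥0∞)) ?_ ?_
    · exact (hΦm.comp measurable_snd).ennreal_ofReal
    · exact (f.continuous.measurable.comp
        ((measurable_snd.norm.inv).smul measurable_fst)).nnnorm.coe_nnreal_ennreal
  set A : EuclideanSpace ℝ (Fin n) → ℝ≥0∞ :=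
    fun y => ∫⁻ x in B, (‖f (‖y‖⁻¹ • x)‖₊ : ℝ≥0∞) with hA
  have hswap :
      (∫⁻ x in B, ∫⁻ y, ENNReal.ofReal (Φ y) * (‖f (‖y‖⁻¹ • x)‖₊ : ℝ≥0∞)) =
      ∫⁻ y, ENNReal.ofReal (Φ y) * A y := by
    rw [lintegral_lintegral_swap hmeas.aemeasurable]
    refine lintegral_congr fun y => ?_
    exact lintegral_const_mul _ (f.continuous.measurable.comp
      (measurable_const_smul _)).nnnorm.coe_nnreal_ennreal
  have key : (∫⁻ x in B, (‖hausdorffOp Φ (⇑f) x‖₊ : ℝ≥0∞)) ≤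
      ∫⁻ y, ENNReal.ofReal (Φ y) * A y := by
    calc (∫⁻ x in B, (‖hausdorffOp Φ (⇑f) x‖₊ : ℝ≥0∞))
        ≤ ∫⁻ x in B, ∫⁻ y, ENNReal.ofReal (Φ y) * (‖f (‖y‖⁻¹ • x)‖₊ : ℝ≥0∞) :=
          lintegral_mono fun x => hpt x
      _ = ∫⁻ y, ENNReal.ofReal (Φ y) * A y := hswap
  have hsplit : (∫⁻ y, ENNReal.ofReal (Φ y) * A y) =
      (∫⁻ y in B, ENNReal.ofReal (Φ y) * A y) + ∫⁻ y in Bᶜ, ENNReal.ofReal (Φ y) * A y :=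
    (lintegral_add_compl _ measurableSet_ball).symm
  have hT1 : (∫⁻ y in B, ENNReal.ofReal (Φ y) * A y) ≤
      (∫⁻ y in B, ENNReal.ofReal (‖y‖ ^ n * Φ y)) * eLpNorm (⇑f) 1 volume := by
    have hae : ∀ᵐ y ∂(volume.restrict B), ENNReal.ofReal (Φ y) * A y ≤
        ENNReal.ofReal (‖y‖ ^ n * Φ y) * eLpNorm (⇑f) 1 volume := by
      refine ae_restrict_of_ae ?_
      have h0 : ∀ᵐ y : EuclideanSpace ℝ (Fin n), y ≠ 0 := by
        simp [ae_iff, measure_singleton]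
      filter_upwards [h0] with y hy
      calc ENNReal.ofReal (Φ y) * A y
          ≤ ENNReal.ofReal (Φ y) * (ENNReal.ofReal (‖y‖ ^ n) * ∫⁻ z, (‖f z‖₊ : ℝ≥0∞)) :=
            mul_le_mul_right (ball_est_aux (⇑f) hy) _
        _ = ENNReal.ofReal (‖y‖ ^ n * Φ y) * eLpNorm (⇑f) 1 volume := by
            rw [hL1, ENNReal.ofReal_mul (pow_nonneg (norm_nonneg y) n), ← mul_assoc,
              mul_comm (ENNReal.ofReal (Φ y))]
    calc (∫⁻ y in B, ENNReal.ofReal (Φ y) * A y)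
        ≤ ∫⁻ y in B, ENNReal.ofReal (‖y‖ ^ n * Φ y) * eLpNorm (⇑f) 1 volume :=
          lintegral_mono_ae hae
      _ = (∫⁻ y in B, ENNReal.ofReal (‖y‖ ^ n * Φ y)) * eLpNorm (⇑f) 1 volume :=
          lintegral_mul_const _ ((measurable_norm.pow_const n).mul hΦm).ennreal_ofReal
  have hT2 : (∫⁻ y in Bᶜ, ENNReal.ofReal (Φ y) * A y) ≤
      volume B * eLpNorm (⇑f) ⊤ volume * ∫⁻ y in Bᶜ, ENNReal.ofReal (Φ y) := by
    have hptw : ∀ y ∈ Bᶜ, ENNReal.ofReal (Φ y) * A y ≤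
        ENNReal.ofReal (Φ y) * (volume B * eLpNorm (⇑f) ⊤ volume) := by
      intro y hy
      have hy0 : y ≠ 0 := by
        intro h
        apply hy
        rw [h, hB, mem_ball, dist_self]; exact one_pos
      exact mul_le_mul_right (compl_est_aux (⇑f) hy0) _
    calc (∫⁻ y in Bᶜ, ENNReal.ofReal (Φ y) * A y)
        ≤ ∫⁻ y in Bᶜ, ENNReal.ofReal (Φ y) * (volume B * eLpNorm (⇑f) ⊤ volume) :=
          setLIntegral_mono (hΦm.ennreal_ofReal.mul_const _) hptw
      _ = volume B * eLpNorm (⇑f) ⊤ volume * ∫⁻ y in Bᶜ, ENNReal.ofReal (Φ y) := by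
          simp_rw [mul_comm (ENNReal.ofReal (Φ _))]
          exact lintegral_const_mul _ hΦm.ennreal_ofReal
  have main : (∫⁻ x in B, (‖hausdorffOp Φ (⇑f) x‖₊ : ℝ≥0∞)) ≤
      (∫⁻ y in B, ENNReal.ofReal (‖y‖ ^ n * Φ y)) * eLpNorm (⇑f) 1 volume +
        volume B * eLpNorm (⇑f) ⊤ volume * ∫⁻ y in Bᶜ, ENNReal.ofReal (Φ y) :=
    key.trans (le_trans (le_of_eq hsplit) (add_le_add hT1 hT2))
  refine ⟨main, lt_of_le_of_lt main ?_⟩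
  exact ENNReal.add_lt_top.2 ⟨ENNReal.mul_lt_top hb1 hL1fin,
    ENNReal.mul_lt_top (ENNReal.mul_lt_top hBfin hLinf_fin) hb2⟩
end
end

section
/- Let Φ : ℝⁿ → [0,∞) be measurable with ∫ Φ(y) min{1,|y|ⁿ} dy < ∞ and let f, g be Schwartz functions. Then the pairing identity ⟨𝓕(H_Φ f), g⟩ = ⟨H̃_Φ(𝓕 f), g⟩ holds, where H̃_Φ h(x) = ∫_{ℝⁿ} Φ(y) |y|ⁿ h(|y| x) dy; i.e., formally 𝓕(H_Φ f) = H̃_Φ(𝓕 f) as tempered distributions. -/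
open MeasureTheory Metric Complex
open scoped ENNReal NNReal RealInnerProductSpace FourierTransform

noncomputable section

namespace HausdorffAux

variable {n : ℕ}

lemma fourier_comp_inv_smul (f : EuclideanSpace ℝ (Fin n) → ℂ) {c : ℝ} (hc : 0 < c)
    (ξ : EuclideanSpace ℝ (Fin n)) :
    𝓕 (fun x => f (c⁻¹ • x)) ξ = ((c ^ n : ℝ) : ℂ) * 𝓕 f (c • ξ) := by
  rw [Real.fourier_eq]
  calc (∫ x : EuclideanSpace ℝ (Fin n), 𝐞 (-⟪x, ξ⟫) • f (c⁻¹ • x))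
      = ∫ x : EuclideanSpace ℝ (Fin n),
          (fun v => (𝐞 (-⟪v, c • ξ⟫) : Circle) • f v) (c⁻¹ • x) := by
        congr 1
        funext x
        simp only [real_inner_smul_left, real_inner_smul_right]
        rw [← mul_assoc, mul_inv_cancel₀ hc.ne', one_mul]
    _ = |c ^ Module.finrank ℝ (EuclideanSpace ℝ (Fin n))| •
          ∫ v, (𝐞 (-⟪v, c • ξ⟫) : Circle) • f v :=
        MeasureTheory.Measure.integral_comp_inv_smul volume (fun v => (𝐞 (-⟪v, c • ξ⟫) : Circle) • f v) c
    _ = ((c ^ n : ℝ) : ℂ) * 𝓕 f (c • ξ) := by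
        rw [Real.fourier_eq, finrank_euclideanSpace_fin,
          _root_.abs_of_nonneg (pow_nonneg hc.le n), Complex.real_smul]

lemma mult_formula {h g : EuclideanSpace ℝ (Fin n) → ℂ}
    (hh : Integrable h) (hg : Integrable g) :
    ∫ ξ, 𝓕 h ξ * g ξ = ∫ x, h x * 𝓕 g x := by
  have hflip : (innerₗ (EuclideanSpace ℝ (Fin n))).flip = innerₗ (EuclideanSpace ℝ (Fin n)) := by
    apply LinearMap.ext; intro x; apply LinearMap.ext; intro y
    simp only [LinearMap.flip_apply, innerₗ_apply_apply]
    exact real_inner_comm x y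
  have h2 := VectorFourier.integral_bilin_fourierIntegral_eq_flip
      (ContinuousLinearMap.mul ℂ ℂ) (Real.continuous_fourierChar)
      (L := innerₗ (EuclideanSpace ℝ (Fin n))) continuous_inner hh hg
  rw [hflip] at h2
  exact h2

lemma key_identity (f g : SchwartzMap (EuclideanSpace ℝ (Fin n)) ℂ) {c : ℝ} (hc : 0 < c) :
    ∫ x, f (c⁻¹ • x) * 𝓕 (⇑g) x = ∫ ξ, ((c ^ n : ℝ) : ℂ) * (𝓕 (⇑f) (c • ξ) * g ξ) := by
  have hint : Integrable (fun x : EuclideanSpace ℝ (Fin n) => f (c⁻¹ • x)) :=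
    f.integrable.comp_smul (inv_ne_zero hc.ne')
  rw [← mult_formula hint g.integrable]
  refine integral_congr_ae (Filter.Eventually.of_forall fun ξ => ?_)
  simp only
  rw [fourier_comp_inv_smul (⇑f) hc ξ, mul_assoc]



lemma weight_integrable (Φ : EuclideanSpace ℝ (Fin n) → ℝ)
    (hΦm : Measurable Φ) (hΦnn : ∀ y, 0 ≤ Φ y)
    (hfin : (∫⁻ y, ENNReal.ofReal (Φ y * min 1 (‖y‖ ^ n))) < ⊤) :
    Integrable (fun y : EuclideanSpace ℝ (Fin n) => Φ y * min 1 (‖y‖ ^ n)) := by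
  have hm : Measurable fun y : EuclideanSpace ℝ (Fin n) => Φ y * min 1 (‖y‖ ^ n) :=
    hΦm.mul (measurable_const.min (measurable_norm.pow_const n))
  refine ⟨hm.aestronglyMeasurable, ?_⟩
  rw [hasFiniteIntegral_iff_ofReal (Filter.Eventually.of_forall fun y =>
    mul_nonneg (hΦnn y) (le_min zero_le_one (pow_nonneg (norm_nonneg _) n)))]
  exact hfin

lemma ae_ne_zero (hn : 0 < n) : ∀ᵐ y : EuclideanSpace ℝ (Fin n), y ≠ 0 := by
  haveI : Nontrivial (EuclideanSpace ℝ (Fin n)) :=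
    Module.nontrivial_of_finrank_pos (R := ℝ) (by rw [finrank_euclideanSpace_fin]; exact hn)
  refine ae_iff.2 ?_
  have h0 : {y : EuclideanSpace ℝ (Fin n) | ¬ y ≠ 0} = {(0 : EuclideanSpace ℝ (Fin n))} := by
    ext y; simp
  rw [h0]
  exact measure_singleton _

lemma intP (hn : 0 < n) (Φ : EuclideanSpace ℝ (Fin n) → ℝ)
    (hΦm : Measurable Φ) (hΦnn : ∀ y, 0 ≤ Φ y)
    (hfin : (∫⁻ y, ENNReal.ofReal (Φ y * min 1 (‖y‖ ^ n))) < ⊤)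
    (u v : SchwartzMap (EuclideanSpace ℝ (Fin n)) ℂ) :
    Integrable (Function.uncurry fun y x : EuclideanSpace ℝ (Fin n) =>
      (Φ y : ℂ) * (u (‖y‖⁻¹ • x) * v x)) (volume.prod volume) := by
  set Mu := (SchwartzMap.seminorm ℝ 0 0) u with hMu
  set Mv := (SchwartzMap.seminorm ℝ 0 0) v with hMv
  have hsmul : Measurable fun p : EuclideanSpace ℝ (Fin n) × EuclideanSpace ℝ (Fin n) =>
      (‖p.1‖⁻¹ • p.2 : EuclideanSpace ℝ (Fin n)) :=
    (measurable_fst.norm.inv).smul measurable_snd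
  have hmeas : AEStronglyMeasurable (Function.uncurry fun y x : EuclideanSpace ℝ (Fin n) =>
      (Φ y : ℂ) * (u (‖y‖⁻¹ • x) * v x)) (volume.prod volume) := by
    apply Measurable.aestronglyMeasurable
    simp only [Function.uncurry_def]
    exact (Complex.measurable_ofReal.comp (hΦm.comp measurable_fst)).mul
      ((u.continuous.measurable.comp hsmul).mul (v.continuous.measurable.comp measurable_snd))
  rw [integrable_prod_iff hmeas]
  constructor
  · filter_upwards [ae_ne_zero hn] with y hy
    have hc : (0:ℝ) < ‖y‖ := norm_pos_iff.2 hy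
    have h1 : Integrable (fun x : EuclideanSpace ℝ (Fin n) => u (‖y‖⁻¹ • x)) :=
      u.integrable.comp_smul (inv_ne_zero hc.ne')
    have h2 : Integrable (fun x : EuclideanSpace ℝ (Fin n) => u (‖y‖⁻¹ • x) * v x) := by
      have := Integrable.bdd_mul h1 v.continuous.aestronglyMeasurable
        (Filter.Eventually.of_forall fun x => SchwartzMap.norm_le_seminorm ℝ v x)
      exact this.congr (Filter.Eventually.of_forall fun x => mul_comm _ _)
    simpa only [Function.uncurry_apply_pair] using h2.const_mul ((Φ y : ℂ))
  · have hdom : Integrable (fun y : EuclideanSpace ℝ (Fin n) =>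
        (max (Mu * ∫ x, ‖v x‖) (Mv * ∫ x, ‖u x‖)) * (Φ y * min 1 (‖y‖ ^ n))) :=
      (weight_integrable Φ hΦm hΦnn hfin).const_mul _
    refine Integrable.mono' hdom (hmeas.norm.integral_prod_right') ?_
    filter_upwards [ae_ne_zero hn] with y hy
    have hc : (0:ℝ) < ‖y‖ := norm_pos_iff.2 hy
    set K := max (Mu * ∫ x, ‖v x‖) (Mv * ∫ x, ‖u x‖) with hK
    have hnn : 0 ≤ ∫ x, ‖(Φ y : ℂ) * (u (‖y‖⁻¹ • x) * v x)‖ :=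
      integral_nonneg fun x => norm_nonneg _
    have heq : ∀ x : EuclideanSpace ℝ (Fin n),
        ‖(Φ y : ℂ) * (u (‖y‖⁻¹ • x) * v x)‖ = Φ y * (‖u (‖y‖⁻¹ • x)‖ * ‖v x‖) := by
      intro x
      rw [norm_mul, norm_mul, Complex.norm_real, Real.norm_eq_abs, _root_.abs_of_nonneg (hΦnn y)]
    have hstep : (∫ x, ‖(Φ y : ℂ) * (u (‖y‖⁻¹ • x) * v x)‖)
        = Φ y * ∫ x, ‖u (‖y‖⁻¹ • x)‖ * ‖v x‖ := by
      simp_rw [heq]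
      exact integral_const_mul _ _
    simp only [Function.uncurry_apply_pair]
    rw [Real.norm_eq_abs, _root_.abs_of_nonneg hnn, hstep]
    have hI : (0:ℝ) ≤ ∫ x, ‖u (‖y‖⁻¹ • x)‖ * ‖v x‖ :=
      integral_nonneg fun x => mul_nonneg (norm_nonneg _) (norm_nonneg _)
    rcases le_total ((‖y‖:ℝ) ^ n) 1 with h1 | h1
    · rw [min_eq_right h1]
      have hb : (∫ x, ‖u (‖y‖⁻¹ • x)‖ * ‖v x‖) ≤ Mv * (∫ x, ‖u x‖) * ‖y‖ ^ n := by
        have hint : Integrable (fun x : EuclideanSpace ℝ (Fin n) => Mv * ‖u (‖y‖⁻¹ • x)‖) :=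
          (u.integrable.norm.comp_smul (inv_ne_zero hc.ne')).const_mul _
        calc (∫ x, ‖u (‖y‖⁻¹ • x)‖ * ‖v x‖)
            ≤ ∫ x, Mv * ‖u (‖y‖⁻¹ • x)‖ := by
              refine integral_mono_of_nonneg (Filter.Eventually.of_forall fun x =>
                mul_nonneg (norm_nonneg _) (norm_nonneg _)) hint
                (Filter.Eventually.of_forall fun x => ?_)
              exact le_of_le_of_eq (mul_le_mul_of_nonneg_left
                (SchwartzMap.norm_le_seminorm ℝ v x) (norm_nonneg _)) (mul_comm _ _)
          _ = Mv * (∫ x, ‖u (‖y‖⁻¹ • x)‖) := integral_const_mul _ _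
          _ = Mv * (∫ x, ‖u x‖) * ‖y‖ ^ n := by
              have hcv := MeasureTheory.Measure.integral_comp_inv_smul
                (volume) (fun x : EuclideanSpace ℝ (Fin n) => ‖u x‖) ‖y‖
              rw [finrank_euclideanSpace_fin,
                _root_.abs_of_nonneg (pow_nonneg hc.le n), smul_eq_mul] at hcv
              rw [hcv]; ring
      calc Φ y * ∫ x, ‖u (‖y‖⁻¹ • x)‖ * ‖v x‖
          ≤ Φ y * (Mv * (∫ x, ‖u x‖) * ‖y‖ ^ n) := mul_le_mul_of_nonneg_left hb (hΦnn y)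
        _ = (Mv * ∫ x, ‖u x‖) * (Φ y * ‖y‖ ^ n) := by ring
        _ ≤ K * (Φ y * ‖y‖ ^ n) := mul_le_mul_of_nonneg_right (le_max_right _ _)
            (mul_nonneg (hΦnn y) (pow_nonneg (norm_nonneg _) n))
    · rw [min_eq_left h1]
      have hb : (∫ x, ‖u (‖y‖⁻¹ • x)‖ * ‖v x‖) ≤ Mu * ∫ x, ‖v x‖ := by
        have hint : Integrable (fun x : EuclideanSpace ℝ (Fin n) => Mu * ‖v x‖) :=
          v.integrable.norm.const_mul _
        calc (∫ x, ‖u (‖y‖⁻¹ • x)‖ * ‖v x‖)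
            ≤ ∫ x, Mu * ‖v x‖ := by
              refine integral_mono_of_nonneg (Filter.Eventually.of_forall fun x =>
                mul_nonneg (norm_nonneg _) (norm_nonneg _)) hint
                (Filter.Eventually.of_forall fun x => ?_)
              exact mul_le_mul_of_nonneg_right (SchwartzMap.norm_le_seminorm ℝ u _)
                (norm_nonneg _)
          _ = Mu * ∫ x, ‖v x‖ := integral_const_mul _ _
      calc Φ y * ∫ x, ‖u (‖y‖⁻¹ • x)‖ * ‖v x‖
          ≤ Φ y * (Mu * ∫ x, ‖v x‖) := mul_le_mul_of_nonneg_left hb (hΦnn y)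
        _ = (Mu * ∫ x, ‖v x‖) * (Φ y * 1) := by ring
        _ ≤ K * (Φ y * 1) := mul_le_mul_of_nonneg_right (le_max_left _ _)
            (by simpa using hΦnn y)

lemma intQ (hn : 0 < n) (Φ : EuclideanSpace ℝ (Fin n) → ℝ)
    (hΦm : Measurable Φ) (hΦnn : ∀ y, 0 ≤ Φ y)
    (hfin : (∫⁻ y, ENNReal.ofReal (Φ y * min 1 (‖y‖ ^ n))) < ⊤)
    (u v : SchwartzMap (EuclideanSpace ℝ (Fin n)) ℂ) :
    Integrable (Function.uncurry fun y ξ : EuclideanSpace ℝ (Fin n) =>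
      (Φ y : ℂ) * (((‖y‖ ^ n : ℝ) : ℂ) * (u (‖y‖ • ξ) * v ξ))) (volume.prod volume) := by
  set Mu := (SchwartzMap.seminorm ℝ 0 0) u with hMu
  set Mv := (SchwartzMap.seminorm ℝ 0 0) v with hMv
  have hsmul : Measurable fun p : EuclideanSpace ℝ (Fin n) × EuclideanSpace ℝ (Fin n) =>
      (‖p.1‖ • p.2 : EuclideanSpace ℝ (Fin n)) :=
    (measurable_fst.norm).smul measurable_snd
  have hmeas : AEStronglyMeasurable (Function.uncurry fun y ξ : EuclideanSpace ℝ (Fin n) =>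
      (Φ y : ℂ) * (((‖y‖ ^ n : ℝ) : ℂ) * (u (‖y‖ • ξ) * v ξ))) (volume.prod volume) := by
    apply Measurable.aestronglyMeasurable
    simp only [Function.uncurry_def]
    exact (Complex.measurable_ofReal.comp (hΦm.comp measurable_fst)).mul
      ((Complex.measurable_ofReal.comp ((measurable_fst.norm.pow_const n))).mul
        ((u.continuous.measurable.comp hsmul).mul (v.continuous.measurable.comp measurable_snd)))
  rw [integrable_prod_iff hmeas]
  constructor
  · filter_upwards [ae_ne_zero hn] with y hy
    have hc : (0:ℝ) < ‖y‖ := norm_pos_iff.2 hy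
    have h1 : Integrable (fun ξ : EuclideanSpace ℝ (Fin n) => u (‖y‖ • ξ)) :=
      u.integrable.comp_smul hc.ne'
    have h2 : Integrable (fun ξ : EuclideanSpace ℝ (Fin n) => u (‖y‖ • ξ) * v ξ) := by
      have := Integrable.bdd_mul h1 v.continuous.aestronglyMeasurable
        (Filter.Eventually.of_forall fun x => SchwartzMap.norm_le_seminorm ℝ v x)
      exact this.congr (Filter.Eventually.of_forall fun x => mul_comm _ _)
    simpa only [Function.uncurry_apply_pair] using
      (h2.const_mul (((‖y‖ ^ n : ℝ) : ℂ))).const_mul ((Φ y : ℂ))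
  · have hdom : Integrable (fun y : EuclideanSpace ℝ (Fin n) =>
        (max (Mu * ∫ x, ‖v x‖) (Mv * ∫ x, ‖u x‖)) * (Φ y * min 1 (‖y‖ ^ n))) :=
      (weight_integrable Φ hΦm hΦnn hfin).const_mul _
    refine Integrable.mono' hdom (hmeas.norm.integral_prod_right') ?_
    filter_upwards [ae_ne_zero hn] with y hy
    have hc : (0:ℝ) < ‖y‖ := norm_pos_iff.2 hy
    set K := max (Mu * ∫ x, ‖v x‖) (Mv * ∫ x, ‖u x‖) with hK
    have hnn : 0 ≤ ∫ ξ, ‖(Φ y : ℂ) * (((‖y‖ ^ n : ℝ) : ℂ) * (u (‖y‖ • ξ) * v ξ))‖ :=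
      integral_nonneg fun x => norm_nonneg _
    have heq : ∀ ξ : EuclideanSpace ℝ (Fin n),
        ‖(Φ y : ℂ) * (((‖y‖ ^ n : ℝ) : ℂ) * (u (‖y‖ • ξ) * v ξ))‖
          = Φ y * (‖y‖ ^ n * (‖u (‖y‖ • ξ)‖ * ‖v ξ‖)) := by
      intro ξ
      rw [norm_mul, norm_mul, norm_mul, Complex.norm_real, Complex.norm_real,
        Real.norm_eq_abs, Real.norm_eq_abs, _root_.abs_of_nonneg (hΦnn y),
        _root_.abs_of_nonneg (pow_nonneg (norm_nonneg y) n)]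
    have hstep : (∫ ξ, ‖(Φ y : ℂ) * (((‖y‖ ^ n : ℝ) : ℂ) * (u (‖y‖ • ξ) * v ξ))‖)
        = Φ y * (‖y‖ ^ n * ∫ ξ, ‖u (‖y‖ • ξ)‖ * ‖v ξ‖) := by
      simp_rw [heq]
      rw [integral_const_mul, integral_const_mul]
    simp only [Function.uncurry_apply_pair]
    rw [Real.norm_eq_abs, _root_.abs_of_nonneg hnn, hstep]
    have hI : (0:ℝ) ≤ ∫ ξ, ‖u (‖y‖ • ξ)‖ * ‖v ξ‖ :=
      integral_nonneg fun x => mul_nonneg (norm_nonneg _) (norm_nonneg _)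
    rcases le_total ((‖y‖:ℝ) ^ n) 1 with h1 | h1
    · rw [min_eq_right h1]
      have hb : (∫ ξ, ‖u (‖y‖ • ξ)‖ * ‖v ξ‖) ≤ Mu * ∫ x, ‖v x‖ := by
        have hint : Integrable (fun ξ : EuclideanSpace ℝ (Fin n) => Mu * ‖v ξ‖) :=
          v.integrable.norm.const_mul _
        calc (∫ ξ, ‖u (‖y‖ • ξ)‖ * ‖v ξ‖)
            ≤ ∫ ξ, Mu * ‖v ξ‖ := by
              refine integral_mono_of_nonneg (Filter.Eventually.of_forall fun x =>
                mul_nonneg (norm_nonneg _) (norm_nonneg _)) hint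
                (Filter.Eventually.of_forall fun x => ?_)
              exact mul_le_mul_of_nonneg_right (SchwartzMap.norm_le_seminorm ℝ u _)
                (norm_nonneg _)
          _ = Mu * ∫ x, ‖v x‖ := integral_const_mul _ _
      calc Φ y * (‖y‖ ^ n * ∫ ξ, ‖u (‖y‖ • ξ)‖ * ‖v ξ‖)
          ≤ Φ y * (‖y‖ ^ n * (Mu * ∫ x, ‖v x‖)) := by
            refine mul_le_mul_of_nonneg_left ?_ (hΦnn y)
            exact mul_le_mul_of_nonneg_left hb (pow_nonneg (norm_nonneg _) n)
        _ = (Mu * ∫ x, ‖v x‖) * (Φ y * ‖y‖ ^ n) := by ring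
        _ ≤ K * (Φ y * ‖y‖ ^ n) := mul_le_mul_of_nonneg_right (le_max_left _ _)
            (mul_nonneg (hΦnn y) (pow_nonneg (norm_nonneg _) n))
    · rw [min_eq_left h1]
      have hb : (∫ ξ, ‖u (‖y‖ • ξ)‖ * ‖v ξ‖) ≤ Mv * ((‖y‖ ^ n)⁻¹ * ∫ x, ‖u x‖) := by
        have hint : Integrable (fun ξ : EuclideanSpace ℝ (Fin n) => Mv * ‖u (‖y‖ • ξ)‖) :=
          (u.integrable.norm.comp_smul hc.ne').const_mul _
        calc (∫ ξ, ‖u (‖y‖ • ξ)‖ * ‖v ξ‖)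
            ≤ ∫ ξ, Mv * ‖u (‖y‖ • ξ)‖ := by
              refine integral_mono_of_nonneg (Filter.Eventually.of_forall fun x =>
                mul_nonneg (norm_nonneg _) (norm_nonneg _)) hint
                (Filter.Eventually.of_forall fun x => ?_)
              exact le_of_le_of_eq (mul_le_mul_of_nonneg_left
                (SchwartzMap.norm_le_seminorm ℝ v _) (norm_nonneg _)) (mul_comm _ _)
          _ = Mv * (∫ ξ, ‖u (‖y‖ • ξ)‖) := integral_const_mul _ _
          _ = Mv * ((‖y‖ ^ n)⁻¹ * ∫ x, ‖u x‖) := by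
              have hcv := MeasureTheory.Measure.integral_comp_smul
                (volume) (fun x : EuclideanSpace ℝ (Fin n) => ‖u x‖) ‖y‖
              rw [finrank_euclideanSpace_fin,
                _root_.abs_of_nonneg (inv_nonneg.2 (pow_nonneg hc.le n)), smul_eq_mul] at hcv
              rw [hcv]
      calc Φ y * (‖y‖ ^ n * ∫ ξ, ‖u (‖y‖ • ξ)‖ * ‖v ξ‖)
          ≤ Φ y * (‖y‖ ^ n * (Mv * ((‖y‖ ^ n)⁻¹ * ∫ x, ‖u x‖))) := by
            refine mul_le_mul_of_nonneg_left ?_ (hΦnn y)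
            exact mul_le_mul_of_nonneg_left hb (pow_nonneg (norm_nonneg _) n)
        _ = (Mv * ∫ x, ‖u x‖) * (Φ y * (‖y‖ ^ n * (‖y‖ ^ n)⁻¹)) := by ring
        _ = (Mv * ∫ x, ‖u x‖) * (Φ y * 1) := by
            rw [mul_inv_cancel₀ (pow_ne_zero n hc.ne')]
        _ ≤ K * (Φ y * 1) := mul_le_mul_of_nonneg_right (le_max_right _ _)
            (by simpa using hΦnn y)

end HausdorffAux

theorem stmt4 {n : ℕ} (Φ : EuclideanSpace ℝ (Fin n) → ℝ)
    (hΦm : Measurable Φ) (hΦnn : ∀ y, 0 ≤ Φ y)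
    (hfin : (∫⁻ y, ENNReal.ofReal (Φ y * min 1 (‖y‖ ^ n))) < ⊤)
    (f g : SchwartzMap (EuclideanSpace ℝ (Fin n)) ℂ) :
    ∫ x, hausdorffOp Φ (⇑f) x * 𝓕 (⇑g) x = ∫ x, hausdorffAdj Φ (𝓕 (⇑f)) x * g x := by
  rcases Nat.eq_zero_or_pos n with hn | hn
  · subst hn
    haveI : Subsingleton (EuclideanSpace ℝ (Fin 0)) :=
      ⟨fun a b => by ext i; exact Fin.elim0 i⟩
    have hx0 : ∀ z : EuclideanSpace ℝ (Fin 0), z = 0 := fun z => Subsingleton.elim z 0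
    refine integral_congr_ae (Filter.Eventually.of_forall fun x => ?_)
    have hF : ∀ h : EuclideanSpace ℝ (Fin 0) → ℂ,
        𝓕 h x = ((volume (Set.univ : Set (EuclideanSpace ℝ (Fin 0)))).toReal : ℝ) • h x := by
      intro h
      rw [Real.fourier_eq]
      have hpt : ∀ v : EuclideanSpace ℝ (Fin 0), (𝐞 (-⟪v, x⟫) : Circle) • h v = h x := by
        intro v
        rw [hx0 v]
        have h0 : ⟪(0 : EuclideanSpace ℝ (Fin 0)), x⟫ = 0 := inner_zero_left x
        rw [h0, neg_zero, AddChar.map_zero_eq_one, one_smul]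
        exact congrArg h (hx0 x).symm
      rw [integral_congr_ae (Filter.Eventually.of_forall hpt), integral_const, measureReal_def]
    have e1 : hausdorffOp Φ (⇑f) x = (∫ y, (Φ y : ℂ)) * f x := by
      rw [show hausdorffOp Φ (⇑f) x = ∫ y, (Φ y : ℂ) * f (‖y‖⁻¹ • x) from rfl,
        ← integral_mul_const]
      exact integral_congr_ae (Filter.Eventually.of_forall fun y => by
        simp only
        rw [Subsingleton.elim (‖y‖⁻¹ • x) x])
    have e2 : hausdorffAdj Φ (𝓕 ⇑f) x = (∫ y, (Φ y : ℂ)) * 𝓕 (⇑f) x := by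
      rw [show hausdorffAdj Φ (𝓕 ⇑f) x
          = ∫ y, (Φ y : ℂ) * ((‖y‖ ^ 0 : ℝ) : ℂ) * 𝓕 (⇑f) (‖y‖ • x) from rfl,
        ← integral_mul_const]
      refine integral_congr_ae (Filter.Eventually.of_forall fun y => ?_)
      simp only
      rw [Subsingleton.elim (‖y‖ • x) x, pow_zero]
      push_cast
      ring
    simp only
    rw [e1, e2, hF (⇑f), hF (⇑g), Complex.real_smul, Complex.real_smul]
    ring
  · have swap1 : (∫ x, ∫ y, (Φ y : ℂ) * (f (‖y‖⁻¹ • x) * 𝓕 (⇑g) x))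
        = ∫ y, ∫ x, (Φ y : ℂ) * (f (‖y‖⁻¹ • x) * 𝓕 (⇑g) x) := by
      refine (MeasureTheory.integral_integral_swap ?_).symm
      exact HausdorffAux.intP hn Φ hΦm hΦnn hfin f (SchwartzMap.fourierTransformCLM ℝ g)
    have swap2 : (∫ y, ∫ ξ, (Φ y : ℂ) * (((‖y‖ ^ n : ℝ) : ℂ) * (𝓕 (⇑f) (‖y‖ • ξ) * g ξ)))
        = ∫ ξ, ∫ y, (Φ y : ℂ) * (((‖y‖ ^ n : ℝ) : ℂ) * (𝓕 (⇑f) (‖y‖ • ξ) * g ξ)) :=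
      MeasureTheory.integral_integral_swap
        (HausdorffAux.intQ hn Φ hΦm hΦnn hfin (SchwartzMap.fourierTransformCLM ℝ f) g)
    calc ∫ x, hausdorffOp Φ (⇑f) x * 𝓕 (⇑g) x
        = ∫ x, ∫ y, (Φ y : ℂ) * (f (‖y‖⁻¹ • x) * 𝓕 (⇑g) x) := by
          refine integral_congr_ae (Filter.Eventually.of_forall fun x => ?_)
          simp only
          rw [show hausdorffOp Φ (⇑f) x = ∫ y, (Φ y : ℂ) * f (‖y‖⁻¹ • x) from rfl,
            ← integral_mul_const]
          exact integral_congr_ae (Filter.Eventually.of_forall fun y => by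
            simp only; ring)
      _ = ∫ y, ∫ x, (Φ y : ℂ) * (f (‖y‖⁻¹ • x) * 𝓕 (⇑g) x) := swap1
      _ = ∫ y, ∫ ξ, (Φ y : ℂ) * (((‖y‖ ^ n : ℝ) : ℂ) * (𝓕 (⇑f) (‖y‖ • ξ) * g ξ)) := by
          refine integral_congr_ae ?_
          filter_upwards [HausdorffAux.ae_ne_zero hn] with y hy
          have hc : (0:ℝ) < ‖y‖ := norm_pos_iff.2 hy
          rw [integral_const_mul, integral_const_mul, HausdorffAux.key_identity f g hc]
      _ = ∫ ξ, ∫ y, (Φ y : ℂ) * (((‖y‖ ^ n : ℝ) : ℂ) * (𝓕 (⇑f) (‖y‖ • ξ) * g ξ)) := swap2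
      _ = ∫ x, hausdorffAdj Φ (𝓕 (⇑f)) x * g x := by
          refine integral_congr_ae (Filter.Eventually.of_forall fun ξ => ?_)
          simp only
          rw [show hausdorffAdj Φ (𝓕 ⇑f) ξ
              = ∫ y, (Φ y : ℂ) * ((‖y‖ ^ n : ℝ) : ℂ) * 𝓕 (⇑f) (‖y‖ • ξ) from rfl,
            ← integral_mul_const]
          exact integral_congr_ae (Filter.Eventually.of_forall fun y => by
            simp only; ring)
end
end

section
/- Let Φ : ℝⁿ → [0,∞) be measurable with ∫ Φ(y) min{1,|y|ⁿ} dy < ∞. Then the map f ↦ H_Φ f, viewed from Schwartz functions to tempered distributions via ⟨H_Φ f, g⟩ = ∫ H_Φ f(x) g(x) dx, is continuous: if g_l → 0 in the Schwartz topology then ⟨H_Φ f, g_l⟩ → 0 for each fixed Schwartz f, with the quantitative bound |⟨H_Φ f, g⟩| ≤ (‖f‖_{L¹}+‖f‖_{L^∞})(‖g‖_{L¹}+‖g‖_{L^∞}) ∫ Φ(y) min{1,|y|ⁿ} dy. -/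
open MeasureTheory Metric Complex
open scoped ENNReal NNReal RealInnerProductSpace FourierTransform

set_option maxHeartbeats 1000000

noncomputable section

/-! ### Auxiliary lemmas -/

lemma aux_pt_le {n : ℕ} {f : EuclideanSpace ℝ (Fin n) → ℂ} (hf : Continuous f)
    (z : EuclideanSpace ℝ (Fin n)) : (‖f z‖₊ : ℝ≥0∞) ≤ eLpNormEssSup f volume := by
  by_contra h
  push_neg at h
  have hopen : IsOpen {x : EuclideanSpace ℝ (Fin n) |
      eLpNormEssSup f volume < (‖f x‖₊ : ℝ≥0∞)} :=
    isOpen_lt continuous_const (ENNReal.continuous_coe.comp hf.nnnorm)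
  have hpos := hopen.measure_pos volume ⟨z, h⟩
  have hnull : volume {x : EuclideanSpace ℝ (Fin n) |
      eLpNormEssSup f volume < (‖f x‖₊ : ℝ≥0∞)} = 0 := by
    have := ae_le_eLpNormEssSup (f := f) (μ := (volume : Measure (EuclideanSpace ℝ (Fin n))))
    simp only [ae_iff, not_le] at this; exact this
  simp [hnull] at hpos

lemma aux_scale {n : ℕ} (f : EuclideanSpace ℝ (Fin n) → ℝ≥0∞) {c : ℝ} (hc : c ≠ 0) :
    ∫⁻ x, f (c • x) = ENNReal.ofReal |(c ^ n)⁻¹| * ∫⁻ x, f x := by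
  calc ∫⁻ x, f (c • x)
      = ∫⁻ y, f y ∂(Measure.map (c • ·) (volume : Measure (EuclideanSpace ℝ (Fin n)))) :=
        (lintegral_map_equiv f
          (Homeomorph.smul (isUnit_iff_ne_zero.2 hc).unit).toMeasurableEquiv).symm
    _ = _ := by
        rw [Measure.map_addHaar_smul volume hc, lintegral_smul_measure,
          finrank_euclideanSpace_fin, smul_eq_mul]

lemma aux_ofReal_min (a b : ℝ) :
    ENNReal.ofReal (min a b) = min (ENNReal.ofReal a) (ENNReal.ofReal b) :=
  Monotone.map_min fun _ _ h => ENNReal.ofReal_le_ofReal h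

lemma aux_inner {n : ℕ} (f g : SchwartzMap (EuclideanSpace ℝ (Fin n)) ℂ)
    (y : EuclideanSpace ℝ (Fin n)) (hy : y ≠ 0 ∨ n = 0) :
    (∫⁻ x, (‖f (‖y‖⁻¹ • x)‖₊ : ℝ≥0∞) * ‖g x‖₊) ≤
      (eLpNorm (⇑f) 1 volume + eLpNorm (⇑f) ⊤ volume) *
        (eLpNorm (⇑g) 1 volume + eLpNorm (⇑g) ⊤ volume) *
          min 1 (ENNReal.ofReal (‖y‖ ^ n)) := by
  set Mf := eLpNorm (⇑f) 1 volume + eLpNorm (⇑f) ⊤ volume with hMf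
  set Mg := eLpNorm (⇑g) 1 volume + eLpNorm (⇑g) ⊤ volume with hMg
  have hFinf : eLpNorm (⇑f) ⊤ volume ≠ ⊤ := by
    refine ((memLp_top_of_bound f.continuous.aestronglyMeasurable _
      (Filter.Eventually.of_forall (f.norm_le_seminorm ℝ))).eLpNorm_lt_top).ne
  rw [eLpNorm_exponent_top] at hFinf
  have hGinf : eLpNorm (⇑g) ⊤ volume ≠ ⊤ := by
    refine ((memLp_top_of_bound g.continuous.aestronglyMeasurable _
      (Filter.Eventually.of_forall (g.norm_le_seminorm ℝ))).eLpNorm_lt_top).ne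
  rw [eLpNorm_exponent_top] at hGinf
  rcases le_total (1 : ℝ≥0∞) (ENNReal.ofReal (‖y‖ ^ n)) with h1 | h1
  · rw [min_eq_left h1]
    calc ∫⁻ x, (‖f (‖y‖⁻¹ • x)‖₊ : ℝ≥0∞) * ‖g x‖₊
        ≤ ∫⁻ x, eLpNormEssSup (⇑f) volume * ‖g x‖₊ :=
          lintegral_mono fun x => mul_le_mul_left (aux_pt_le f.continuous _) _
      _ = eLpNormEssSup (⇑f) volume * ∫⁻ x, (‖g x‖₊ : ℝ≥0∞) := lintegral_const_mul' _ _ hFinf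
      _ ≤ Mf * Mg * 1 := by
          rw [mul_one]
          refine mul_le_mul' ?_ ?_
          · rw [hMf, ← eLpNorm_exponent_top]; exact le_add_self
          · rw [hMg, eLpNorm_one_eq_lintegral_enorm]; exact le_self_add
  · rw [min_eq_right h1]
    have key : (∫⁻ x, (‖f (‖y‖⁻¹ • x)‖₊ : ℝ≥0∞)) ≤
        ENNReal.ofReal (‖y‖ ^ n) * eLpNorm (⇑f) 1 volume := by
      rcases hy with hy | hn
      · have hc : (‖y‖⁻¹ : ℝ) ≠ 0 := by
          simp [norm_ne_zero_iff.2 hy]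
        rw [aux_scale (fun z => (‖f z‖₊ : ℝ≥0∞)) hc, eLpNorm_one_eq_lintegral_enorm]
        rw [inv_pow, inv_inv, _root_.abs_of_nonneg (pow_nonneg (norm_nonneg y) n)]
        exact le_rfl
      · subst hn
        haveI : Subsingleton (EuclideanSpace ℝ (Fin 0)) := inferInstance
        have : ∀ x : EuclideanSpace ℝ (Fin 0), ‖y‖⁻¹ • x = x := fun x => Subsingleton.elim _ _
        simp only [this, pow_zero, ENNReal.ofReal_one, one_mul,
          eLpNorm_one_eq_lintegral_enorm]
        exact le_rfl
    calc ∫⁻ x, (‖f (‖y‖⁻¹ • x)‖₊ : ℝ≥0∞) * ‖g x‖₊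
        ≤ ∫⁻ x, (‖f (‖y‖⁻¹ • x)‖₊ : ℝ≥0∞) * eLpNormEssSup (⇑g) volume :=
          lintegral_mono fun x => mul_le_mul_right (aux_pt_le g.continuous _) _
      _ = (∫⁻ x, (‖f (‖y‖⁻¹ • x)‖₊ : ℝ≥0∞)) * eLpNormEssSup (⇑g) volume :=
          lintegral_mul_const' _ _ hGinf
      _ ≤ (ENNReal.ofReal (‖y‖ ^ n) * eLpNorm (⇑f) 1 volume) * eLpNormEssSup (⇑g) volume :=
          mul_le_mul_left key _
      _ ≤ Mf * Mg * ENNReal.ofReal (‖y‖ ^ n) := by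
          rw [mul_comm (ENNReal.ofReal _) _, mul_assoc, mul_assoc]
          refine mul_le_mul' (by rw [hMf]; exact le_self_add) ?_
          rw [mul_comm]
          refine mul_le_mul_left ?_ _
          rw [hMg, ← eLpNorm_exponent_top]; exact le_add_self

lemma aux_key {n : ℕ} (Φ : EuclideanSpace ℝ (Fin n) → ℝ)
    (hΦm : Measurable Φ) (hΦnn : ∀ y, 0 ≤ Φ y)
    (f g : SchwartzMap (EuclideanSpace ℝ (Fin n)) ℂ) :
    (‖∫ x, hausdorffOp Φ (⇑f) x * g x‖₊ : ℝ≥0∞) ≤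
      (eLpNorm (⇑f) 1 volume + eLpNorm (⇑f) ⊤ volume) *
        (eLpNorm (⇑g) 1 volume + eLpNorm (⇑g) ⊤ volume) *
          ∫⁻ y, ENNReal.ofReal (Φ y * min 1 (‖y‖ ^ n)) := by
  set Mf := eLpNorm (⇑f) 1 volume + eLpNorm (⇑f) ⊤ volume with hMf
  set Mg := eLpNorm (⇑g) 1 volume + eLpNorm (⇑g) ⊤ volume with hMg
  have hMfne : Mf ≠ ⊤ := by
    rw [hMf]
    refine ENNReal.add_ne_top.2 ⟨?_, ?_⟩
    · exact ((memLp_one_iff_integrable.2 f.integrable).eLpNorm_lt_top).ne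
    · exact ((memLp_top_of_bound f.continuous.aestronglyMeasurable _
        (Filter.Eventually.of_forall (f.norm_le_seminorm ℝ))).eLpNorm_lt_top).ne
  have hMgne : Mg ≠ ⊤ := by
    rw [hMg]
    refine ENNReal.add_ne_top.2 ⟨?_, ?_⟩
    · exact ((memLp_one_iff_integrable.2 g.integrable).eLpNorm_lt_top).ne
    · exact ((memLp_top_of_bound g.continuous.aestronglyMeasurable _
        (Filter.Eventually.of_forall (g.norm_le_seminorm ℝ))).eLpNorm_lt_top).ne
  have hsm : Measurable fun p : (EuclideanSpace ℝ (Fin n)) × (EuclideanSpace ℝ (Fin n)) =>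
      ‖p.2‖⁻¹ • p.1 :=
    (continuous_smul (M := ℝ) (X := EuclideanSpace ℝ (Fin n))).measurable.comp
      ((measurable_snd.norm.inv).prodMk measurable_fst)
  have hmeas : Measurable fun p : (EuclideanSpace ℝ (Fin n)) × (EuclideanSpace ℝ (Fin n)) =>
      (ENNReal.ofReal (Φ p.2) * (‖f (‖p.2‖⁻¹ • p.1)‖₊ : ℝ≥0∞)) * (‖g p.1‖₊ : ℝ≥0∞) := by
    refine Measurable.fun_mul (Measurable.fun_mul ?_ ?_) ?_
    · exact ENNReal.measurable_ofReal.comp (hΦm.comp measurable_snd)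
    · exact measurable_coe_nnreal_ennreal.comp ((f.continuous.measurable.comp hsm).nnnorm)
    · exact measurable_coe_nnreal_ennreal.comp
        ((g.continuous.measurable.comp measurable_fst).nnnorm)
  have hH : ∀ x : EuclideanSpace ℝ (Fin n), (‖hausdorffOp Φ (⇑f) x‖₊ : ℝ≥0∞) ≤
      ∫⁻ y, ENNReal.ofReal (Φ y) * (‖f (‖y‖⁻¹ • x)‖₊ : ℝ≥0∞) := by
    intro x
    refine (enorm_integral_le_lintegral_enorm _).trans_eq ?_
    refine lintegral_congr fun y => ?_
    rw [enorm_eq_nnnorm, nnnorm_mul, ENNReal.coe_mul]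
    congr 1
    rw [Complex.nnnorm_real]
    exact Real.enorm_eq_ofReal (hΦnn y)
  have hae : ∀ᵐ y : EuclideanSpace ℝ (Fin n), y ≠ 0 ∨ n = 0 := by
    rcases Nat.eq_zero_or_pos n with hn | hn
    · exact Filter.Eventually.of_forall fun y => Or.inr hn
    · haveI : Nontrivial (EuclideanSpace ℝ (Fin n)) :=
        Module.nontrivial_of_finrank_pos (R := ℝ)
          (by rw [finrank_euclideanSpace_fin]; exact hn)
      have h0 : (volume : Measure (EuclideanSpace ℝ (Fin n)))
          {(0 : EuclideanSpace ℝ (Fin n))} = 0 := measure_singleton 0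
      rw [ae_iff]
      convert h0 using 2
      ext y
      simp [hn.ne']
  calc (‖∫ x, hausdorffOp Φ (⇑f) x * g x‖₊ : ℝ≥0∞)
      ≤ ∫⁻ x, ‖hausdorffOp Φ (⇑f) x * g x‖₊ := enorm_integral_le_lintegral_enorm _
    _ = ∫⁻ x, (‖hausdorffOp Φ (⇑f) x‖₊ : ℝ≥0∞) * ‖g x‖₊ := by
        simp [nnnorm_mul, ENNReal.coe_mul]
    _ ≤ ∫⁻ x, (∫⁻ y, ENNReal.ofReal (Φ y) * (‖f (‖y‖⁻¹ • x)‖₊ : ℝ≥0∞)) * ‖g x‖₊ :=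
        lintegral_mono fun x => mul_le_mul_left (hH x) _
    _ = ∫⁻ x, ∫⁻ y, (ENNReal.ofReal (Φ y) * (‖f (‖y‖⁻¹ • x)‖₊ : ℝ≥0∞)) * ‖g x‖₊ :=
        lintegral_congr fun x => (lintegral_mul_const' _ _ ENNReal.coe_ne_top).symm
    _ = ∫⁻ y, ∫⁻ x, (ENNReal.ofReal (Φ y) * (‖f (‖y‖⁻¹ • x)‖₊ : ℝ≥0∞)) * ‖g x‖₊ :=
        lintegral_lintegral_swap hmeas.aemeasurable
    _ = ∫⁻ y, ENNReal.ofReal (Φ y) * ∫⁻ x, (‖f (‖y‖⁻¹ • x)‖₊ : ℝ≥0∞) * ‖g x‖₊ := by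
        refine lintegral_congr fun y => ?_
        rw [← lintegral_const_mul' _ _ ENNReal.ofReal_ne_top]
        simp [mul_assoc]
    _ ≤ ∫⁻ y, (Mf * Mg) * ENNReal.ofReal (Φ y * min 1 (‖y‖ ^ n)) := by
        refine lintegral_mono_ae (hae.mono fun y hy => ?_)
        rw [ENNReal.ofReal_mul (hΦnn y), aux_ofReal_min, ENNReal.ofReal_one]
        calc ENNReal.ofReal (Φ y) * ∫⁻ x, (‖f (‖y‖⁻¹ • x)‖₊ : ℝ≥0∞) * ‖g x‖₊
            ≤ ENNReal.ofReal (Φ y) * (Mf * Mg * min 1 (ENNReal.ofReal (‖y‖ ^ n))) :=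
              mul_le_mul_right (aux_inner f g y hy) _
          _ = Mf * Mg * (ENNReal.ofReal (Φ y) * min 1 (ENNReal.ofReal (‖y‖ ^ n))) := by ring
    _ = Mf * Mg * ∫⁻ y, ENNReal.ofReal (Φ y * min 1 (‖y‖ ^ n)) := by
        rw [lintegral_const_mul' _ _ (ENNReal.mul_ne_top hMfne hMgne)]

def auxSN {n : ℕ} (m : ℕ × ℕ) : Seminorm ℝ (SchwartzMap (EuclideanSpace ℝ (Fin n)) ℂ) :=
  SchwartzMap.seminorm ℝ m.1 m.2

def auxN {n : ℕ} (g : SchwartzMap (EuclideanSpace ℝ (Fin n)) ℂ) : ℝ :=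
  (∫ x : EuclideanSpace ℝ (Fin n), (1 + ‖x‖) ^ (-((n + 1 : ℕ) : ℝ))) * (2 ^ (n + 1) *
    ∑ m ∈ Finset.Iic ((n + 1 : ℕ), (0 : ℕ)), auxSN m g) + auxSN (0, 0) g

lemma auxN_nonneg {n : ℕ} (g : SchwartzMap (EuclideanSpace ℝ (Fin n)) ℂ) : 0 ≤ auxN g := by
  have hA : 0 ≤ ∫ x : EuclideanSpace ℝ (Fin n), (1 + ‖x‖) ^ (-((n + 1 : ℕ) : ℝ)) :=
    integral_nonneg fun x => Real.rpow_nonneg (by positivity) _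
  have hS : 0 ≤ ∑ m ∈ Finset.Iic ((n + 1 : ℕ), (0 : ℕ)), auxSN m g :=
    Finset.sum_nonneg fun m _ => apply_nonneg (auxSN m) g
  have h0 : (0 : ℝ) ≤ auxSN (0, 0) g := apply_nonneg _ _
  have h2 : (0:ℝ) ≤ (2:ℝ) ^ (n+1) := by positivity
  exact add_nonneg (mul_nonneg hA (mul_nonneg h2 hS)) h0

lemma auxN_bound {n : ℕ} (g : SchwartzMap (EuclideanSpace ℝ (Fin n)) ℂ) :
    eLpNorm (⇑g) 1 volume + eLpNorm (⇑g) ⊤ volume ≤ ENNReal.ofReal (auxN g) := by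
  have hA : 0 ≤ ∫ x : EuclideanSpace ℝ (Fin n), (1 + ‖x‖) ^ (-((n + 1 : ℕ) : ℝ)) :=
    integral_nonneg fun x => Real.rpow_nonneg (by positivity) _
  have hS : 0 ≤ ∑ m ∈ Finset.Iic ((n + 1 : ℕ), (0 : ℕ)), auxSN m g :=
    Finset.sum_nonneg fun m _ => apply_nonneg (auxSN m) g
  have hk : ((Module.finrank ℝ (EuclideanSpace ℝ (Fin n))) : ℝ) < ((n + 1 : ℕ) : ℝ) := by
    rw [finrank_euclideanSpace_fin]; exact_mod_cast lt_add_one n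
  have hint : Integrable (fun x : EuclideanSpace ℝ (Fin n) =>
      (1 + ‖x‖) ^ (-((n + 1 : ℕ) : ℝ))) volume := integrable_one_add_norm hk
  have hpt : ∀ x : EuclideanSpace ℝ (Fin n), ‖g x‖ ≤
      (1 + ‖x‖) ^ (-((n + 1 : ℕ) : ℝ)) * (2 ^ (n + 1) *
        ∑ m ∈ Finset.Iic ((n + 1 : ℕ), (0 : ℕ)), auxSN m g) := by
    intro x
    have h1 := SchwartzMap.one_add_le_sup_seminorm_apply (𝕜 := ℝ)
      (m := ((n + 1 : ℕ), (0 : ℕ))) (k := n + 1) (n := 0) le_rfl le_rfl g x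
    rw [norm_iteratedFDeriv_zero] at h1
    have h2 : (Finset.Iic ((n + 1 : ℕ), (0 : ℕ))).sup auxSN g ≤
        ∑ m ∈ Finset.Iic ((n + 1 : ℕ), (0 : ℕ)), auxSN m g := by
      refine Seminorm.finset_sup_apply_le
        (Finset.sum_nonneg fun m _ => apply_nonneg (auxSN m) g) fun i hi => ?_
      exact Finset.single_le_sum (f := fun m => auxSN m g)
        (fun j _ => apply_nonneg (auxSN j) g) hi
    rw [Real.rpow_neg (by positivity), ← div_eq_inv_mul, le_div_iff₀' (by positivity),
      Real.rpow_natCast]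
    calc (1 + ‖x‖) ^ (n + 1) * ‖g x‖
        ≤ 2 ^ (n + 1) * (Finset.Iic ((n + 1 : ℕ), (0 : ℕ))).sup auxSN g := h1
      _ ≤ _ := by
          have h3 : (0:ℝ) ≤ (2:ℝ) ^ (n+1) := by positivity
          exact mul_le_mul_of_nonneg_left h2 h3
  have hL1 : eLpNorm (⇑g) 1 volume ≤ ENNReal.ofReal
      ((∫ x : EuclideanSpace ℝ (Fin n), (1 + ‖x‖) ^ (-((n + 1 : ℕ) : ℝ))) * (2 ^ (n + 1) *
        ∑ m ∈ Finset.Iic ((n + 1 : ℕ), (0 : ℕ)), auxSN m g)) := by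
    rw [eLpNorm_one_eq_lintegral_enorm,
      ← ofReal_integral_norm_eq_lintegral_enorm g.integrable]
    refine ENNReal.ofReal_le_ofReal ?_
    calc ∫ x, ‖g x‖ ≤ ∫ x : EuclideanSpace ℝ (Fin n),
          (1 + ‖x‖) ^ (-((n + 1 : ℕ) : ℝ)) * (2 ^ (n + 1) *
            ∑ m ∈ Finset.Iic ((n + 1 : ℕ), (0 : ℕ)), auxSN m g) :=
        integral_mono g.integrable.norm (hint.mul_const _) hpt
      _ = _ := integral_mul_const _ _
  have hTop : eLpNorm (⇑g) ⊤ volume ≤ ENNReal.ofReal (auxSN (0, 0) g) := by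
    rw [eLpNorm_exponent_top]
    exact eLpNormEssSup_le_of_ae_bound
      (Filter.Eventually.of_forall (g.norm_le_seminorm ℝ))
  refine (add_le_add hL1 hTop).trans ?_
  rw [auxN, ← ENNReal.ofReal_add (mul_nonneg hA (mul_nonneg (by positivity) hS))
    (apply_nonneg _ _)]

lemma auxN_tendsto {n : ℕ} (G : ℕ → SchwartzMap (EuclideanSpace ℝ (Fin n)) ℂ)
    (hG : Filter.Tendsto G Filter.atTop (nhds 0)) :
    Filter.Tendsto (fun l => auxN (G l)) Filter.atTop (nhds 0) := by
  have hsem : ∀ m : ℕ × ℕ, Filter.Tendsto (fun l => auxSN m (G l))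
      Filter.atTop (nhds 0) := by
    intro m
    have hc : Continuous fun g : SchwartzMap (EuclideanSpace ℝ (Fin n)) ℂ =>
        (schwartzSeminormFamily ℝ (EuclideanSpace ℝ (Fin n)) ℂ m) g :=
      (schwartz_withSeminorms ℝ (EuclideanSpace ℝ (Fin n)) ℂ).continuous_seminorm m
    have := (hc.tendsto 0).comp hG
    simpa [schwartzSeminormFamily, auxSN, Function.comp_def] using this
  have hsum : Filter.Tendsto (fun l =>
      ∑ m ∈ Finset.Iic ((n + 1 : ℕ), (0 : ℕ)), auxSN m (G l))
      Filter.atTop (nhds 0) := by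
    have := tendsto_finset_sum (Finset.Iic ((n + 1 : ℕ), (0 : ℕ)))
      (fun m _ => hsem m)
    simpa using this
  have h1 := hsum.const_mul ((∫ x : EuclideanSpace ℝ (Fin n),
      (1 + ‖x‖) ^ (-((n + 1 : ℕ) : ℝ))) * 2 ^ (n + 1))
  have h2 := hsem (0, 0)
  have h3 := h1.add h2
  simp only [mul_zero, add_zero] at h3
  refine h3.congr fun l => ?_
  rw [auxN]; ring

theorem stmt6 {n : ℕ} (Φ : EuclideanSpace ℝ (Fin n) → ℝ)
    (hΦm : Measurable Φ) (hΦnn : ∀ y, 0 ≤ Φ y)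
    (hfin : (∫⁻ y, ENNReal.ofReal (Φ y * min 1 (‖y‖ ^ n))) < ⊤)
    (f : SchwartzMap (EuclideanSpace ℝ (Fin n)) ℂ) :
    (∀ g : SchwartzMap (EuclideanSpace ℝ (Fin n)) ℂ,
      (‖∫ x, hausdorffOp Φ (⇑f) x * g x‖₊ : ℝ≥0∞) ≤
        (eLpNorm (⇑f) 1 volume + eLpNorm (⇑f) ⊤ volume) *
          (eLpNorm (⇑g) 1 volume + eLpNorm (⇑g) ⊤ volume) *
            ∫⁻ y, ENNReal.ofReal (Φ y * min 1 (‖y‖ ^ n))) ∧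
    ∀ G : ℕ → SchwartzMap (EuclideanSpace ℝ (Fin n)) ℂ, Filter.Tendsto G Filter.atTop (nhds 0) →
      Filter.Tendsto (fun l => ∫ x, hausdorffOp Φ (⇑f) x * (G l) x)
        Filter.atTop (nhds 0) := by
  refine ⟨fun g => aux_key Φ hΦm hΦnn f g, ?_⟩
  intro G hG
  set K := ∫⁻ y, ENNReal.ofReal (Φ y * min 1 (‖y‖ ^ n)) with hK
  have hKne : K ≠ ⊤ := hfin.ne
  set Mf := eLpNorm (⇑f) 1 volume + eLpNorm (⇑f) ⊤ volume with hMf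
  have hMfne : Mf ≠ ⊤ := by
    rw [hMf]
    refine ENNReal.add_ne_top.2 ⟨?_, ?_⟩
    · exact ((memLp_one_iff_integrable.2 f.integrable).eLpNorm_lt_top).ne
    · exact ((memLp_top_of_bound f.continuous.aestronglyMeasurable _
        (Filter.Eventually.of_forall (f.norm_le_seminorm ℝ))).eLpNorm_lt_top).ne
  set C := (Mf * K).toReal with hC
  have hCnn : (0 : ℝ) ≤ C := ENNReal.toReal_nonneg
  have hbound : ∀ l, ‖∫ x, hausdorffOp Φ (⇑f) x * (G l) x‖ ≤ C * auxN (G l) := by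
    intro l
    have h1 := aux_key Φ hΦm hΦnn f (G l)
    have h2 : (‖∫ x, hausdorffOp Φ (⇑f) x * (G l) x‖₊ : ℝ≥0∞) ≤
        ENNReal.ofReal (C * auxN (G l)) := by
      refine h1.trans ?_
      calc Mf * (eLpNorm (⇑(G l)) 1 volume + eLpNorm (⇑(G l)) ⊤ volume) * K
          ≤ Mf * ENNReal.ofReal (auxN (G l)) * K :=
            mul_le_mul_left (mul_le_mul_right (auxN_bound (G l)) _) _
        _ = (Mf * K) * ENNReal.ofReal (auxN (G l)) := by ring
        _ = ENNReal.ofReal C * ENNReal.ofReal (auxN (G l)) := by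
            rw [hC, ENNReal.ofReal_toReal (ENNReal.mul_ne_top hMfne hKne)]
        _ = ENNReal.ofReal (C * auxN (G l)) := (ENNReal.ofReal_mul hCnn).symm
    rw [← enorm_eq_nnnorm, ← ofReal_norm] at h2
    exact (ENNReal.ofReal_le_ofReal_iff (mul_nonneg hCnn (auxN_nonneg _))).1 h2
  have htend : Filter.Tendsto (fun l => C * auxN (G l)) Filter.atTop (nhds 0) := by
    have := (auxN_tendsto G hG).const_mul C
    simpa using this
  exact tendsto_zero_iff_norm_tendsto_zero.2
    (squeeze_zero (fun l => norm_nonneg _) hbound htend)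

end
end
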